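/- For every j ∈ {1,2,3} and every Q ≠ P, the j-th column of H is divergence-free in Q: ∑_{k=1}^{3} ∂H_{kj}(Q,P)/∂q_k = 0. -/

import Mathlib

open Real

/-- Partial derivative of a scalar function on ℝ³ with respect to the `l`-th coordinate. -/
noncomputable def pd3 (f : EuclideanSpace ℝ (Fin 3) → ℝ) (l : Fin 3)
    (Q : EuclideanSpace ℝ (Fin 3)) : ℝ :=
  fderiv ℝ f Q (EuclideanSpace.single l 1)

section aux

variable {P Q : EuclideanSpace ℝ (Fin 3)}

lemma aux_hasFDerivAt_norm (h : Q ≠ P) :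
    HasFDerivAt (fun Q'' : EuclideanSpace ℝ (Fin 3) => ‖Q'' - P‖)
      (‖Q - P‖⁻¹ • (innerSL ℝ (Q - P))) Q := by
  have hr : ‖Q - P‖ ≠ 0 := norm_ne_zero_iff.mpr (sub_ne_zero.mpr h)
  have hsub : HasFDerivAt (fun Q'' : EuclideanSpace ℝ (Fin 3) => Q'' - P)
      (ContinuousLinearMap.id ℝ _) Q := (hasFDerivAt_id Q).sub_const P
  have hsq := hsub.norm_sq
  have hsqrt := hsq.sqrt (by simpa using pow_ne_zero 2 hr)
  have h0 : (fun Q'' : EuclideanSpace ℝ (Fin 3) => ‖Q'' - P‖)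
      = fun Q'' => Real.sqrt (‖Q'' - P‖ ^ 2) := by
    funext x; rw [Real.sqrt_sq (norm_nonneg _)]
  rw [h0]
  refine hsqrt.congr_fderiv ?_
  rw [Real.sqrt_sq (norm_nonneg _)]
  ext v
  simp only [ContinuousLinearMap.smul_apply, ContinuousLinearMap.comp_apply,
    ContinuousLinearMap.coe_id', id_eq, ContinuousLinearMap.coe_smul',
    Pi.smul_apply, smul_eq_mul]
  field_simp
  ring

lemma aux_hasFDerivAt_coord (m : Fin 3) (Q : EuclideanSpace ℝ (Fin 3)) :
    HasFDerivAt (fun Q'' : EuclideanSpace ℝ (Fin 3) => (Q'' - P) m)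
      (EuclideanSpace.proj m : EuclideanSpace ℝ (Fin 3) →L[ℝ] ℝ) Q := by
  have := ((EuclideanSpace.proj m :
      EuclideanSpace ℝ (Fin 3) →L[ℝ] ℝ).hasFDerivAt (x := Q)).sub_const (P m)
  exact this

lemma aux_div_sum (C R0 R1 R2 Rj d0 d1 d2 e0 e1 e2 rr : ℝ) (hrr : rr ≠ 0)
    (h : R0 ^ 2 + R1 ^ 2 + R2 ^ 2 = rr ^ 2)
    (hd : R0 * d0 + R1 * d1 + R2 * d2 = Rj)
    (he : R0 * e0 + R1 * e1 + R2 * e2 = Rj) :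
    C * (3 * (R0 / rr) * d0 -
        (R0 * Rj * (-(R0 / rr / rr ^ 2)) + (R0 * e0 + Rj) / rr)) +
    C * (3 * (R1 / rr) * d1 -
        (R1 * Rj * (-(R1 / rr / rr ^ 2)) + (R1 * e1 + Rj) / rr)) +
    C * (3 * (R2 / rr) * d2 -
        (R2 * Rj * (-(R2 / rr / rr ^ 2)) + (R2 * e2 + Rj) / rr)) = 0 := by
  have expand :
      C * (3 * (R0 / rr) * d0 -
          (R0 * Rj * (-(R0 / rr / rr ^ 2)) + (R0 * e0 + Rj) / rr)) +
      C * (3 * (R1 / rr) * d1 -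
          (R1 * Rj * (-(R1 / rr / rr ^ 2)) + (R1 * e1 + Rj) / rr)) +
      C * (3 * (R2 / rr) * d2 -
          (R2 * Rj * (-(R2 / rr / rr ^ 2)) + (R2 * e2 + Rj) / rr))
      = (C / rr) * (3 * (R0 * d0 + R1 * d1 + R2 * d2))
        + (C / rr ^ 3) * ((R0 ^ 2 + R1 ^ 2 + R2 ^ 2) * Rj)
        - (C / rr) * (R0 * e0 + R1 * e1 + R2 * e2) - 3 * ((C / rr) * Rj) := by
    field_simp
    ring
  rw [expand, hd, he, h]
  field_simp
  ring

end aux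

/-- Each column of H is divergence-free in Q: ∑_k ∂H_{kj}/∂q_k = 0 for Q ≠ P. -/
theorem H_column_divergence_free
    (μ : ℝ) (hμ : 0 < μ) (P : EuclideanSpace ℝ (Fin 3))
    (j : Fin 3) (Q : EuclideanSpace ℝ (Fin 3)) (hQ : Q ≠ P) :
    (∑ k : Fin 3,
        pd3 (fun Q'' =>
          (1 / (32 * π * μ ^ 2)) *
            (3 * ‖Q'' - P‖ * (if k = j then (1 : ℝ) else 0) -
              (Q'' - P) k * (Q'' - P) j / ‖Q'' - P‖)) k Q) = 0 := by
  have hr : ‖Q - P‖ ≠ 0 := norm_ne_zero_iff.mpr (sub_ne_zero.mpr hQ)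
  set c : ℝ := 1 / (32 * π * μ ^ 2) with hc
  set r : ℝ := ‖Q - P‖ with hrdef
  have key : ∀ k : Fin 3,
      pd3 (fun Q'' =>
          c * (3 * ‖Q'' - P‖ * (if k = j then (1 : ℝ) else 0) -
              (Q'' - P) k * (Q'' - P) j / ‖Q'' - P‖)) k Q
      = c * (3 * ((Q - P) k / r) * (if k = j then (1 : ℝ) else 0) -
          ((Q - P) k * (Q - P) j * (-((Q - P) k / r / r ^ 2)) +
            ((Q - P) k * (if j = k then (1 : ℝ) else 0) + (Q - P) j) / r)) := by
    intro k
    have hnorm := aux_hasFDerivAt_norm hQ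
    have hinv : HasFDerivAt (fun Q'' : EuclideanSpace ℝ (Fin 3) => ‖Q'' - P‖⁻¹)
        ((ContinuousLinearMap.smulRight (1 : ℝ →L[ℝ] ℝ) (-(r ^ 2)⁻¹)).comp
          (r⁻¹ • innerSL ℝ (Q - P))) Q := (hasFDerivAt_inv hr).comp Q hnorm
    have hk := aux_hasFDerivAt_coord (P := P) k Q
    have hj := aux_hasFDerivAt_coord (P := P) j Q
    have hmul := hk.mul hj
    have hfrac := hmul.mul hinv
    have h3 := (hnorm.const_mul (3 : ℝ)).mul_const (if k = j then (1 : ℝ) else 0)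
    have hfull := (h3.sub hfrac).const_mul c
    have hd' : (fun Q'' : EuclideanSpace ℝ (Fin 3) =>
          c * (3 * ‖Q'' - P‖ * (if k = j then (1 : ℝ) else 0) -
              (Q'' - P) k * (Q'' - P) j / ‖Q'' - P‖))
        = (fun Q'' =>
          c * (3 * ‖Q'' - P‖ * (if k = j then (1 : ℝ) else 0) -
              (Q'' - P) k * (Q'' - P) j * ‖Q'' - P‖⁻¹)) := by
      funext x; rw [div_eq_mul_inv]
    rw [pd3, hd', HasFDerivAt.fderiv (f := fun Q'' : EuclideanSpace ℝ (Fin 3) =>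
          c * (3 * ‖Q'' - P‖ * (if k = j then (1 : ℝ) else 0) -
              (Q'' - P) k * (Q'' - P) j * ‖Q'' - P‖⁻¹)) hfull]
    simp only [ContinuousLinearMap.smul_apply, ContinuousLinearMap.sub_apply,
      ContinuousLinearMap.add_apply, ContinuousLinearMap.comp_apply,
      ContinuousLinearMap.smulRight_apply, ContinuousLinearMap.one_apply,
      innerSL_apply_apply, smul_eq_mul, PiLp.proj_apply,
      EuclideanSpace.inner_single_right, conj_trivial,
      EuclideanSpace.single_apply, if_pos rfl, Pi.mul_apply, if_true]
    rw [← hrdef]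
    field_simp
  simp only [key]
  rw [Fin.sum_univ_three]
  have hsq2 : (Q - P) 0 ^ 2 + (Q - P) 1 ^ 2 + (Q - P) 2 ^ 2 = r ^ 2 := by
    rw [hrdef, EuclideanSpace.norm_eq, Real.sq_sqrt (by positivity), Fin.sum_univ_three]
    simp [Real.norm_eq_abs, sq_abs]
  refine aux_div_sum c ((Q - P) 0) ((Q - P) 1) ((Q - P) 2) ((Q - P) j)
    _ _ _ _ _ _ r hr hsq2 ?_ ?_
  · fin_cases j <;> norm_num [Fin.ext_iff] <;> rfl
  · fin_cases j <;> norm_num [Fin.ext_iff] <;> rfl
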